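/- (Proposition 2) Let 0 < α < 1 and let u, h : [x₁, x₂] → ℝ be continuously differentiable and strictly positive. For t ≥ −u(x)/h(x) set g(x,t) = (1−α)·u(x)^(1−2α)·h(x)^(2α)·(t + u(x)/h(x))^(2α)·u′(x) + α·u(x)^(2−2α)·h(x)^(2α−1)·(t + u(x)/h(x))^(2α−1)·u′(x) + α·u(x)^(2−2α)·h(x)^(2α−1)·(t + u(x)/h(x))^(2α−1)·t·h′(x), which is the x-derivative of u^(1−α)(u+th)^α multiplied by u^(1−α)(u+th)^α. Then the function ε ↦ ∫_{x₁}^{x₂} ∫_{−u(x)/h(x)}^{ε} g(x,t)·(ε−t)^(−α) dt dx is differentiable at ε = 0, and (1/Γ(1−α)) times its derivative at ε = 0 equals ∫_{x₁}^{x₂} [((1−α)·Γ(2α+1)/Γ(α+1) + α·Γ(2α)/Γ(α))·u(x)^(1−α)·h(x)^α·u′(x) + (α²·Γ(2α)/Γ(α+1))·u(x)^(2−α)·h(x)^(α−1)·h′(x)] dx. (This is the fractional Gateaux variation δ^α F[u] of the functional F[u] = ∫_{x₁}^{x₂} u(x)·u′(x) dx; for α = 1 it reduces to the classical first variation ∫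 (u′·h + u·h′) dx.) -/

import Mathlib

open MeasureTheory intervalIntegral Set

lemma betaIntble {p q : ℝ} (hp : 0 < p) (hq : 0 < q) :
    IntervalIntegrable (fun v : ℝ => v ^ (p-1) * (1-v) ^ (q-1)) volume 0 1 := by
  have h1 : IntervalIntegrable (fun v : ℝ => v ^ (p-1) * (1-v) ^ (q-1)) volume 0 (1/2) := by
    apply IntervalIntegrable.mul_continuousOn
    · exact intervalIntegrable_rpow' (by linarith)
    · apply ContinuousOn.rpow_const (by fun_prop)
      intro x hx
      rw [Set.uIcc_of_le (by norm_num)] at hx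
      left; intro hc; linarith [hx.2, sub_eq_zero.mp hc]
  have h2 : IntervalIntegrable (fun v : ℝ => v ^ (p-1) * (1-v) ^ (q-1)) volume (1/2) 1 := by
    apply IntervalIntegrable.continuousOn_mul (g := fun v : ℝ => v ^ (p-1))
    · have : IntervalIntegrable (fun x : ℝ => x ^ (q-1)) volume 0 (1/2) :=
        intervalIntegrable_rpow' (by linarith)
      have := (this.comp_sub_left 1).symm; norm_num at this; exact this
    · apply ContinuousOn.rpow_const (by fun_prop)
      intro x hx
      rw [Set.uIcc_of_le (by norm_num)] at hx
      left; intro hc; rw [hc] at hx; norm_num at hx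
  exact h1.trans h2

lemma realBeta {p q : ℝ} (hp : 0 < p) (hq : 0 < q) :
    ∫ v in (0:ℝ)..1, v ^ (p-1) * (1-v) ^ (q-1)
      = Real.Gamma p * Real.Gamma q / Real.Gamma (p+q) := by
  have hcast : ((∫ v in (0:ℝ)..1, v ^ (p-1) * (1-v) ^ (q-1) : ℝ) : ℂ)
      = Complex.betaIntegral p q := by
    rw [← intervalIntegral.integral_ofReal]
    unfold Complex.betaIntegral
    apply intervalIntegral.integral_congr
    intro v hv
    rw [Set.uIcc_of_le (by norm_num)] at hv
    push_cast
    rw [Complex.ofReal_cpow hv.1 (p-1), Complex.ofReal_cpow (by linarith [hv.2]) (q-1)]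
    push_cast
    ring
  have hG : Complex.Gamma p * Complex.Gamma q
      = Complex.Gamma (p+q) * Complex.betaIntegral p q :=
    Complex.Gamma_mul_Gamma_eq_betaIntegral (by simpa using hp) (by simpa using hq)
  have hpq : Real.Gamma (p+q) ≠ 0 := (Real.Gamma_pos_of_pos (by linarith)).ne'
  rw [← hcast] at hG
  have : ((Real.Gamma p * Real.Gamma q : ℝ) : ℂ)
      = ((Real.Gamma (p+q) * ∫ v in (0:ℝ)..1, v ^ (p-1) * (1-v) ^ (q-1) : ℝ) : ℂ) := by
    push_cast [← Complex.Gamma_ofReal]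
    push_cast at hG ⊢
    convert hG using 2 <;> push_cast <;> ring_nf
  have h2 := Complex.ofReal_injective this
  field_simp at h2 ⊢
  linarith [h2]

lemma Jintble {a s β α : ℝ} (hsa : 0 < s + a) (hβ : -1 < β) (hα0 : 0 < α) (hα1 : α < 1) :
    IntervalIntegrable (fun t : ℝ => (t+a)^β * (s-t)^(-α)) volume (-a) s := by
  set m : ℝ := (-a + s) / 2 with hm
  have hm1 : -a < m := by rw [hm]; linarith
  have hm2 : m < s := by rw [hm]; linarith
  have h1 : IntervalIntegrable (fun t : ℝ => (t+a)^β * (s-t)^(-α)) volume (-a) m := by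
    apply IntervalIntegrable.mul_continuousOn
    · have : IntervalIntegrable (fun x : ℝ => x ^ β) volume 0 (m + a) :=
        intervalIntegrable_rpow' hβ
      simpa using this.comp_add_right a
    · apply ContinuousOn.rpow_const (by fun_prop)
      intro t ht
      rw [Set.uIcc_of_le hm1.le] at ht
      left; intro hc; have := sub_eq_zero.mp hc; linarith [ht.2]
  have h2 : IntervalIntegrable (fun t : ℝ => (t+a)^β * (s-t)^(-α)) volume m s := by
    apply IntervalIntegrable.continuousOn_mul (g := fun t : ℝ => (t+a)^β)
    · have : IntervalIntegrable (fun x : ℝ => x ^ (-α)) volume 0 (s - m) :=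
        intervalIntegrable_rpow' (by linarith)
      have := (this.comp_sub_left s).symm
      norm_num at this
      exact this
    · apply ContinuousOn.rpow_const (by fun_prop)
      intro t ht
      rw [Set.uIcc_of_le hm2.le] at ht
      left; intro hc
      have ht1 := ht.1
      have : t = -a := by linarith
      linarith
  exact h1.trans h2

lemma Jval {a s β α : ℝ} (hsa : 0 < s + a) (hβ : -1 < β) (hα0 : 0 < α) (hα1 : α < 1) :
    ∫ t in (-a)..s, (t+a)^β * (s-t)^(-α)
      = (Real.Gamma (β+1) * Real.Gamma (1-α) / Real.Gamma (β+2-α)) * (s+a)^(β+1-α) := by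
  have hne : s + a ≠ 0 := hsa.ne'
  have key := intervalIntegral.integral_comp_mul_add
    (a := (0:ℝ)) (b := 1) (f := fun t => (t+a)^β * (s-t)^(-α)) hne (-a)
  rw [show (s+a)*0 + -a = -a by ring, show (s+a)*1 + -a = s by ring] at key
  have hcongr : (∫ v in (0:ℝ)..1, ((s+a)*v + -a + a)^β * (s - ((s+a)*v + -a))^(-α))
      = ∫ v in (0:ℝ)..1, (s+a)^(β + -α) * (v^((β+1)-1) * (1-v)^((1-α)-1)) := by
    apply intervalIntegral.integral_congr
    intro v hv
    rw [Set.uIcc_of_le (by norm_num)] at hv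
    have h0v : 0 ≤ v := hv.1
    have h1v : 0 ≤ 1 - v := by linarith [hv.2]
    dsimp only
    rw [show (s+a)*v + -a + a = (s+a)*v by ring, show s - ((s+a)*v + -a) = (s+a)*(1-v) by ring,
        Real.mul_rpow hsa.le h0v, Real.mul_rpow hsa.le h1v, Real.rpow_add hsa,
        show (β+1)-1 = β by ring, show (1-α)-1 = -α by ring]
    ring
  rw [hcongr, intervalIntegral.integral_const_mul,
      realBeta (by linarith) (by linarith)] at key
  have : (∫ t in (-a)..s, (t+a)^β * (s-t)^(-α)) = (s+a) • ((s+a)⁻¹ • ∫ t in (-a)..s, (t+a)^β * (s-t)^(-α)) := by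
    rw [smul_smul, mul_inv_cancel₀ hne, one_smul]
  rw [this, ← key, smul_eq_mul, show (β+1)+(1-α) = β+2-α by ring]
  rw [show β+1-α = (β + -α) + 1 by ring, Real.rpow_add_one hne]
  ring

lemma innerval {α a s : ℝ} (c1 c2 c3 : ℝ) (hα0 : 0 < α) (hα1 : α < 1) (hsa : 0 < s + a) :
    (∫ t in (-a)..s, (c1 * (t+a)^(2*α) + c2 * (t+a)^(2*α-1)
        + c3 * (t+a)^(2*α-1) * t) * (s-t)^(-α))
      = ((c1 + c3) * (Real.Gamma (2*α+1) * Real.Gamma (1-α) / Real.Gamma (α+2))) * (s+a)^(α+1)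
        + ((c2 - a*c3) * (Real.Gamma (2*α) * Real.Gamma (1-α) / Real.Gamma (α+1))) * (s+a)^α := by
  have hβ1 : (-1:ℝ) < 2*α := by linarith
  have hβ2 : (-1:ℝ) < 2*α-1 := by linarith
  have hi1 := Jintble (β := 2*α) hsa hβ1 hα0 hα1
  have hi2 := Jintble (β := 2*α-1) hsa hβ2 hα0 hα1
  have hcongr : (∫ t in (-a)..s, (c1 * (t+a)^(2*α) + c2 * (t+a)^(2*α-1)
        + c3 * (t+a)^(2*α-1) * t) * (s-t)^(-α))
      = ∫ t in (-a)..s, ((c1+c3) * ((t+a)^(2*α) * (s-t)^(-α))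
          + (c2 - a*c3) * ((t+a)^(2*α-1) * (s-t)^(-α))) := by
    apply intervalIntegral.integral_congr
    intro t ht
    dsimp only
    have hkey : (t+a)^(2*α-1) * (t+a) = (t+a)^(2*α) := by
      by_cases hy : t + a = 0
      · rw [hy, show ((0:ℝ))^(2*α) = 0 from Real.zero_rpow (by positivity)]; simp
      · rw [← Real.rpow_add_one hy (2*α-1)]; ring_nf
    have h2 : (t+a)^(2*α-1) * t = (t+a)^(2*α) - a * (t+a)^(2*α-1) := by
      have h3 : (t+a)^(2*α-1) * t = (t+a)^(2*α-1)*(t+a) - a*(t+a)^(2*α-1) := by ring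
      rw [h3, hkey]
    linear_combination c3 * (s-t)^(-α) * h2
  rw [hcongr, intervalIntegral.integral_add (hi1.const_mul _) (hi2.const_mul _),
      intervalIntegral.integral_const_mul, intervalIntegral.integral_const_mul,
      Jval hsa hβ1 hα0 hα1, Jval hsa hβ2 hα0 hα1,
      show 2*α+2-α = α+2 by ring, show 2*α+1-α = α+1 by ring,
      show 2*α-1+1 = 2*α by ring, show 2*α-1+2-α = α+1 by ring, show 2*α-α = α by ring]
  ring

lemma finalpt {α U H U' H' : ℝ} (hα0 : 0 < α) (hα1 : α < 1) (hU : 0 < U) (hH : 0 < H) :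
    (1 / Real.Gamma (1-α)) *
      ((((1-α) * U^(1-2*α) * H^(2*α) * U' + α * U^(2-2*α) * H^(2*α-1) * H')
          * (Real.Gamma (2*α+1) * Real.Gamma (1-α) / Real.Gamma (α+2))) * ((α+1) * (U/H)^α)
        + ((α * U^(2-2*α) * H^(2*α-1) * U' - (U/H) * (α * U^(2-2*α) * H^(2*α-1) * H'))
          * (Real.Gamma (2*α) * Real.Gamma (1-α) / Real.Gamma (α+1))) * (α * (U/H)^(α-1)))
    = ((1-α) * Real.Gamma (2*α+1) / Real.Gamma (α+1) + α * Real.Gamma (2*α) / Real.Gamma α)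
        * U^(1-α) * H^α * U'
      + (α^2 * Real.Gamma (2*α) / Real.Gamma (α+1)) * U^(2-α) * H^(α-1) * H' := by
  have hUne := hU.ne'
  have hHne := hH.ne'
  have hX : (0:ℝ) < U ^ α := Real.rpow_pos_of_pos hU α
  have hY : (0:ℝ) < H ^ α := Real.rpow_pos_of_pos hH α
  have eU1 : U^(1-2*α) = U * (U^α)⁻¹ * (U^α)⁻¹ := by
    rw [show 1-2*α = 1 + -α + -α by ring, Real.rpow_add hU, Real.rpow_add hU, Real.rpow_one,
      Real.rpow_neg hU.le]
  have eU2 : U^(2-2*α) = U * U * (U^α)⁻¹ * (U^α)⁻¹ := by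
    rw [show 2-2*α = 1 + 1 + -α + -α by ring, Real.rpow_add hU, Real.rpow_add hU,
      Real.rpow_add hU, Real.rpow_one, Real.rpow_neg hU.le]
  have eU3 : U^(1-α) = U * (U^α)⁻¹ := by
    rw [show 1-α = 1 + -α by ring, Real.rpow_add hU, Real.rpow_one, Real.rpow_neg hU.le]
  have eU4 : U^(2-α) = U * U * (U^α)⁻¹ := by
    rw [show 2-α = 1 + 1 + -α by ring, Real.rpow_add hU, Real.rpow_add hU, Real.rpow_one,
      Real.rpow_neg hU.le]
  have eU5 : U^(α-1) = U^α * U⁻¹ := by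
    rw [show α-1 = α + -1 by ring, Real.rpow_add hU, Real.rpow_neg_one]
  have eH1 : H^(2*α) = H^α * H^α := by
    rw [show 2*α = α + α by ring, Real.rpow_add hH]
  have eH2 : H^(2*α-1) = H^α * H^α * H⁻¹ := by
    rw [show 2*α-1 = α + α + -1 by ring, Real.rpow_add hH, Real.rpow_add hH, Real.rpow_neg_one]
  have eH3 : H^(α-1) = H^α * H⁻¹ := by
    rw [show α-1 = α + -1 by ring, Real.rpow_add hH, Real.rpow_neg_one]
  have hg1 : Real.Gamma (α+1) = α * Real.Gamma α := Real.Gamma_add_one hα0.ne'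
  have hg2 : Real.Gamma (α+2) = (α+1) * (α * Real.Gamma α) := by
    rw [show α+2 = (α+1)+1 by ring, Real.Gamma_add_one (by positivity), hg1]
  have hg3 : Real.Gamma (2*α+1) = 2*α*Real.Gamma (2*α) := Real.Gamma_add_one (by positivity)
  have hGa : Real.Gamma α ≠ 0 := (Real.Gamma_pos_of_pos hα0).ne'
  have hG1a : Real.Gamma (1-α) ≠ 0 := (Real.Gamma_pos_of_pos (by linarith)).ne'
  rw [Real.div_rpow hU.le hH.le, Real.div_rpow hU.le hH.le,
    eU1, eU2, eU3, eU4, eU5, eH1, eH2, eH3, hg2, hg3, hg1]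
  field_simp
  ring

/-- (Proposition 2) The fractional Gateaux variation `δ^α F[u]` of the functional
`F[u] = ∫_{x₁}^{x₂} u(x) u'(x) dx`: with
`g(x,t) = (1-α) u^(1-2α) h^(2α) (t + u/h)^(2α) u' + α u^(2-2α) h^(2α-1) (t + u/h)^(2α-1) u'
  + α u^(2-2α) h^(2α-1) (t + u/h)^(2α-1) t h'`,
the function `ε ↦ ∫_{x₁}^{x₂} ∫_{-u/h}^{ε} g(x,t) (ε-t)^(-α) dt dx` is differentiable at
`ε = 0` and `1/Γ(1-α)` times its derivative there equals
`∫ [((1-α) Γ(2α+1)/Γ(α+1) + α Γ(2α)/Γ(α)) u^(1-α) h^α u'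
   + (α² Γ(2α)/Γ(α+1)) u^(2-α) h^(α-1) h'] dx`. -/
theorem stmt_15 (α x₁ x₂ : ℝ) (hα0 : 0 < α) (hα1 : α < 1) (h12 : x₁ < x₂)
    (u h : ℝ → ℝ)
    (hu : ContDiffOn ℝ 1 u (Set.Icc x₁ x₂)) (hh : ContDiffOn ℝ 1 h (Set.Icc x₁ x₂))
    (hupos : ∀ x ∈ Set.Icc x₁ x₂, 0 < u x) (hhpos : ∀ x ∈ Set.Icc x₁ x₂, 0 < h x) :
    DifferentiableAt ℝ
      (fun s : ℝ => ∫ x in x₁..x₂, ∫ t in (-(u x / h x))..s,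
        ((1 - α) * u x ^ (1 - 2 * α) * h x ^ (2 * α) * (t + u x / h x) ^ (2 * α) *
            derivWithin u (Set.Icc x₁ x₂) x
          + α * u x ^ (2 - 2 * α) * h x ^ (2 * α - 1) * (t + u x / h x) ^ (2 * α - 1) *
              derivWithin u (Set.Icc x₁ x₂) x
          + α * u x ^ (2 - 2 * α) * h x ^ (2 * α - 1) * (t + u x / h x) ^ (2 * α - 1) *
              t * derivWithin h (Set.Icc x₁ x₂) x) * (s - t) ^ (-α)) 0 ∧
    (1 / Real.Gamma (1 - α)) *
        deriv (fun s : ℝ => ∫ x in x₁..x₂, ∫ t in (-(u x / h x))..s,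
          ((1 - α) * u x ^ (1 - 2 * α) * h x ^ (2 * α) * (t + u x / h x) ^ (2 * α) *
              derivWithin u (Set.Icc x₁ x₂) x
            + α * u x ^ (2 - 2 * α) * h x ^ (2 * α - 1) * (t + u x / h x) ^ (2 * α - 1) *
                derivWithin u (Set.Icc x₁ x₂) x
            + α * u x ^ (2 - 2 * α) * h x ^ (2 * α - 1) * (t + u x / h x) ^ (2 * α - 1) *
                t * derivWithin h (Set.Icc x₁ x₂) x) * (s - t) ^ (-α)) 0
      = ∫ x in x₁..x₂,
          (((1 - α) * Real.Gamma (2 * α + 1) / Real.Gamma (α + 1)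
              + α * Real.Gamma (2 * α) / Real.Gamma α) *
            u x ^ (1 - α) * h x ^ α * derivWithin u (Set.Icc x₁ x₂) x
          + (α ^ 2 * Real.Gamma (2 * α) / Real.Gamma (α + 1)) *
              u x ^ (2 - α) * h x ^ (α - 1) * derivWithin h (Set.Icc x₁ x₂) x) := by
  have hIcc : Set.uIcc x₁ x₂ = Set.Icc x₁ x₂ := Set.uIcc_of_le h12.le
  have hIoc : Set.uIoc x₁ x₂ = Set.Ioc x₁ x₂ := Set.uIoc_of_le h12.le
  have hucont := hu.continuousOn
  have hhcont := hh.continuousOn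
  have hu'cont : ContinuousOn (derivWithin u (Set.Icc x₁ x₂)) (Set.Icc x₁ x₂) :=
    hu.continuousOn_derivWithin (uniqueDiffOn_Icc h12) le_rfl
  have hh'cont : ContinuousOn (derivWithin h (Set.Icc x₁ x₂)) (Set.Icc x₁ x₂) :=
    hh.continuousOn_derivWithin (uniqueDiffOn_Icc h12) le_rfl
  have hacont : ContinuousOn (fun x => u x / h x) (Set.Icc x₁ x₂) :=
    hucont.div hhcont (fun x hx => (hhpos x hx).ne')
  have hapos : ∀ x ∈ Set.Icc x₁ x₂, 0 < u x / h x := fun x hx =>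
    div_pos (hupos x hx) (hhpos x hx)
  obtain ⟨xm, hxm, hxmin⟩ :=
    isCompact_Icc.exists_isMinOn ⟨x₁, Set.left_mem_Icc.2 h12.le⟩ hacont
  obtain ⟨xM, hxM, hxmax⟩ :=
    isCompact_Icc.exists_isMaxOn ⟨x₁, Set.left_mem_Icc.2 h12.le⟩ hacont
  set m := u xm / h xm with hm
  set M := u xM / h xM with hM
  have hm0 : 0 < m := hapos xm hxm
  have hm2 : 0 < m/2 := by linarith
  have hmle : ∀ x ∈ Set.Icc x₁ x₂, m ≤ u x / h x := fun x hx => isMinOn_iff.mp hxmin x hx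
  have hMle : ∀ x ∈ Set.Icc x₁ x₂, u x / h x ≤ M := fun x hx => isMaxOn_iff.mp hxmax x hx
  set B1 := Real.Gamma (2*α+1) * Real.Gamma (1-α) / Real.Gamma (α+2) with hB1
  set B2 := Real.Gamma (2*α) * Real.Gamma (1-α) / Real.Gamma (α+1) with hB2
  set A : ℝ → ℝ := fun x =>
    ((1-α) * u x ^ (1-2*α) * h x ^ (2*α) * derivWithin u (Set.Icc x₁ x₂) x
      + α * u x ^ (2-2*α) * h x ^ (2*α-1) * derivWithin h (Set.Icc x₁ x₂) x) * B1 with hA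
  set C : ℝ → ℝ := fun x =>
    (α * u x ^ (2-2*α) * h x ^ (2*α-1) * derivWithin u (Set.Icc x₁ x₂) x
      - (u x / h x) * (α * u x ^ (2-2*α) * h x ^ (2*α-1) * derivWithin h (Set.Icc x₁ x₂) x))
      * B2 with hC
  have hup : ∀ p : ℝ, ContinuousOn (fun x => u x ^ p) (Set.Icc x₁ x₂) :=
    fun p => hucont.rpow_const fun x hx => Or.inl (hupos x hx).ne'
  have hhp : ∀ p : ℝ, ContinuousOn (fun x => h x ^ p) (Set.Icc x₁ x₂) :=
    fun p => hhcont.rpow_const fun x hx => Or.inl (hhpos x hx).ne'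
  have hAcont : ContinuousOn A (Set.Icc x₁ x₂) := by
    apply ContinuousOn.mul _ continuousOn_const
    exact (((continuousOn_const.mul (hup _)).mul (hhp _)).mul hu'cont).add
      (((continuousOn_const.mul (hup _)).mul (hhp _)).mul hh'cont)
  have hCcont : ContinuousOn C (Set.Icc x₁ x₂) := by
    apply ContinuousOn.mul _ continuousOn_const
    exact ((((continuousOn_const.mul (hup _)).mul (hhp _)).mul hu'cont)).sub
      (hacont.mul ((((continuousOn_const.mul (hup _)).mul (hhp _)).mul hh'cont)))
  -- eventual equality with the closed form
  have hev : (fun s : ℝ => ∫ x in x₁..x₂, ∫ t in (-(u x / h x))..s,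
        ((1 - α) * u x ^ (1 - 2 * α) * h x ^ (2 * α) * (t + u x / h x) ^ (2 * α) *
            derivWithin u (Set.Icc x₁ x₂) x
          + α * u x ^ (2 - 2 * α) * h x ^ (2 * α - 1) * (t + u x / h x) ^ (2 * α - 1) *
              derivWithin u (Set.Icc x₁ x₂) x
          + α * u x ^ (2 - 2 * α) * h x ^ (2 * α - 1) * (t + u x / h x) ^ (2 * α - 1) *
              t * derivWithin h (Set.Icc x₁ x₂) x) * (s - t) ^ (-α))
      =ᶠ[nhds 0] (fun s : ℝ => ∫ x in x₁..x₂,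
        (A x * (s + u x / h x) ^ (α+1) + C x * (s + u x / h x) ^ α)) := by
    filter_upwards [Metric.ball_mem_nhds (0:ℝ) hm0] with s hs
    have hsm : |s| < m := by simpa [Real.dist_eq] using Metric.mem_ball.mp hs
    apply intervalIntegral.integral_congr
    intro x hx
    rw [hIcc] at hx
    have hsx : 0 < s + u x / h x := by
      have h1 := hmle x hx
      have h2 := (abs_lt.mp hsm).1
      linarith
    dsimp only
    have hinner : (∫ t in (-(u x / h x))..s,
        ((1 - α) * u x ^ (1 - 2 * α) * h x ^ (2 * α) * (t + u x / h x) ^ (2 * α) *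
            derivWithin u (Set.Icc x₁ x₂) x
          + α * u x ^ (2 - 2 * α) * h x ^ (2 * α - 1) * (t + u x / h x) ^ (2 * α - 1) *
              derivWithin u (Set.Icc x₁ x₂) x
          + α * u x ^ (2 - 2 * α) * h x ^ (2 * α - 1) * (t + u x / h x) ^ (2 * α - 1) *
              t * derivWithin h (Set.Icc x₁ x₂) x) * (s - t) ^ (-α))
        = ∫ t in (-(u x / h x))..s,
            (((1-α) * u x ^ (1-2*α) * h x ^ (2*α) * derivWithin u (Set.Icc x₁ x₂) x)
                * (t + u x / h x) ^ (2*α)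
              + (α * u x ^ (2-2*α) * h x ^ (2*α-1) * derivWithin u (Set.Icc x₁ x₂) x)
                  * (t + u x / h x) ^ (2*α-1)
              + (α * u x ^ (2-2*α) * h x ^ (2*α-1) * derivWithin h (Set.Icc x₁ x₂) x)
                  * (t + u x / h x) ^ (2*α-1) * t) * (s - t) ^ (-α) :=
      intervalIntegral.integral_congr fun t ht => by ring
    rw [hinner, innerval _ _ _ hα0 hα1 hsx]
  -- derivative of the closed form
  have hG : HasDerivAt (fun s : ℝ => ∫ x in x₁..x₂,
        (A x * (s + u x / h x) ^ (α+1) + C x * (s + u x / h x) ^ α))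
      (∫ x in x₁..x₂,
        (A x * ((α+1) * ((0:ℝ) + u x / h x) ^ α) + C x * (α * ((0:ℝ) + u x / h x) ^ (α-1)))) 0 := by
    have hres := intervalIntegral.hasDerivAt_integral_of_dominated_loc_of_deriv_le
      (𝕜 := ℝ) (μ := volume) (a := x₁) (b := x₂)
      (F := fun s x => A x * (s + u x / h x) ^ (α+1) + C x * (s + u x / h x) ^ α)
      (F' := fun s x => A x * ((α+1) * (s + u x / h x) ^ α)
        + C x * (α * (s + u x / h x) ^ (α-1)))
      (x₀ := (0:ℝ))
      (bound := fun x => |A x| * ((α+1) * (M + m/2) ^ α) + |C x| * (α * (m/2) ^ (α-1)))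
      (Metric.ball_mem_nhds (0:ℝ) hm2) ?_ ?_ ?_ ?_ ?_ ?_
    · exact hres.2
    · filter_upwards with s
      apply ContinuousOn.aestronglyMeasurable _ measurableSet_uIoc
      rw [hIoc]
      apply ContinuousOn.mono _ Set.Ioc_subset_Icc_self
      exact (hAcont.mul ((continuousOn_const.add hacont).rpow_const
          fun x hx => Or.inr (by linarith))).add
        (hCcont.mul ((continuousOn_const.add hacont).rpow_const fun x hx => Or.inr hα0.le))
    · apply ContinuousOn.intervalIntegrable
      rw [hIcc]
      exact (hAcont.mul ((continuousOn_const.add hacont).rpow_const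
          fun x hx => Or.inr (by linarith))).add
        (hCcont.mul ((continuousOn_const.add hacont).rpow_const fun x hx => Or.inr hα0.le))
    · apply ContinuousOn.aestronglyMeasurable _ measurableSet_uIoc
      rw [hIoc]
      apply ContinuousOn.mono _ Set.Ioc_subset_Icc_self
      have hne : ∀ x ∈ Set.Icc x₁ x₂, (0:ℝ) + u x / h x ≠ 0 :=
        fun x hx => by have := hapos x hx; intro hc; rw [zero_add] at hc; linarith
      exact (hAcont.mul (continuousOn_const.mul ((continuousOn_const.add hacont).rpow_const
          fun x hx => Or.inl (hne x hx)))).add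
        (hCcont.mul (continuousOn_const.mul ((continuousOn_const.add hacont).rpow_const
          fun x hx => Or.inl (hne x hx))))
    · refine MeasureTheory.ae_of_all _ fun x hx s hs => ?_
      rw [hIoc] at hx
      have hxI := Set.Ioc_subset_Icc_self hx
      have ham := hmle x hxI
      have haM := hMle x hxI
      have hsb := abs_lt.mp (by simpa [Real.dist_eq] using Metric.mem_ball.mp hs)
      have hpos : 0 < s + u x / h x := by linarith [hsb.1]
      have hmid : m/2 ≤ s + u x / h x := by linarith [hsb.1]
      have hup2 : s + u x / h x ≤ M + m/2 := by linarith [hsb.2]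
      have h1 : (s + u x / h x) ^ α ≤ (M + m/2) ^ α :=
        Real.rpow_le_rpow hpos.le hup2 hα0.le
      have h2 : (s + u x / h x) ^ (α-1) ≤ (m/2) ^ (α-1) :=
        Real.rpow_le_rpow_of_nonpos hm2 hmid (by linarith)
      have hr1 : (0:ℝ) ≤ (s + u x / h x) ^ α := Real.rpow_nonneg hpos.le _
      have hr2 : (0:ℝ) ≤ (s + u x / h x) ^ (α-1) := Real.rpow_nonneg hpos.le _
      rw [Real.norm_eq_abs]
      calc |A x * ((α+1) * (s + u x / h x) ^ α) + C x * (α * (s + u x / h x) ^ (α-1))|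
          ≤ |A x * ((α+1) * (s + u x / h x) ^ α)| + |C x * (α * (s + u x / h x) ^ (α-1))| :=
            abs_add_le _ _
        _ = |A x| * ((α+1) * (s + u x / h x) ^ α) + |C x| * (α * (s + u x / h x) ^ (α-1)) := by
            rw [abs_mul (A x), abs_mul (C x), abs_of_nonneg (mul_nonneg (by linarith) hr1),
              abs_of_nonneg (mul_nonneg hα0.le hr2)]
        _ ≤ |A x| * ((α+1) * (M + m/2) ^ α) + |C x| * (α * (m/2) ^ (α-1)) := by
            apply add_le_add
            · exact mul_le_mul_of_nonneg_left
                (mul_le_mul_of_nonneg_left h1 (by linarith)) (abs_nonneg _)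
            · exact mul_le_mul_of_nonneg_left
                (mul_le_mul_of_nonneg_left h2 hα0.le) (abs_nonneg _)
    · apply ContinuousOn.intervalIntegrable
      rw [hIcc]
      exact ((hAcont.abs.mul continuousOn_const)).add ((hCcont.abs.mul continuousOn_const))
    · refine MeasureTheory.ae_of_all _ fun x hx s hs => ?_
      rw [hIoc] at hx
      have ham := hmle x (Set.Ioc_subset_Icc_self hx)
      have hsb := abs_lt.mp (by simpa [Real.dist_eq] using Metric.mem_ball.mp hs)
      have hpos : 0 < s + u x / h x := by linarith [hsb.1]
      have hd0 : HasDerivAt (fun s : ℝ => s + u x / h x) 1 s := (hasDerivAt_id s).add_const _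
      have hd1 : HasDerivAt (fun y : ℝ => y ^ (α+1))
          ((α+1) * (s + u x / h x) ^ (α+1-1)) (s + u x / h x) :=
        Real.hasDerivAt_rpow_const (Or.inl hpos.ne')
      have hd2 : HasDerivAt (fun y : ℝ => y ^ α)
          (α * (s + u x / h x) ^ (α-1)) (s + u x / h x) :=
        Real.hasDerivAt_rpow_const (Or.inl hpos.ne')
      have hc1 := (hd1.comp s hd0).const_mul (A x)
      have hc2 := (hd2.comp s hd0).const_mul (C x)
      have hsum := hc1.add hc2
      convert hsum using 1
      · rfl
      rw [show α+1-1 = α by ring]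
      ring
  refine ⟨?_, ?_⟩
  · rw [hev.differentiableAt_iff]
    exact hG.differentiableAt
  · rw [hev.deriv_eq, hG.deriv, ← intervalIntegral.integral_const_mul]
    apply intervalIntegral.integral_congr
    intro x hx
    rw [hIcc] at hx
    dsimp only
    simp only [hA, hC, hB1, hB2, zero_add]
    exact finalpt hα0 hα1 (hupos x hx) (hhpos x hx)
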